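/- Every subspace of an algebra R over a field of characteristic zero that is invariant under all algebra automorphisms of R is stable under every locally nilpotent derivation of R. -/

import Mathlib

open Finset

section Aux
set_option linter.unusedSectionVars false

variable {K R : Type*} [Field K] [CharZero K] [Ring R] [Algebra K R]

variable (D : R →ₗ[K] R)

lemma fact_ident (i j : ℕ) :
    (((i+j).factorial : K)⁻¹ * ((i+j).choose i : K)) = (i.factorial : K)⁻¹ * (j.factorial : K)⁻¹ := by
  have h := Nat.add_choose_mul_factorial_mul_factorial i j
  have hK : ((i+j).choose i : K) * (i.factorial : K) * (j.factorial : K)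
      = ((i+j).factorial : K) := by
    have hsymm : (i+j).choose j = (i+j).choose i := by
      rw [← Nat.choose_symm (Nat.le_add_right i j), Nat.add_sub_cancel_left]
    rw [← hsymm]; exact_mod_cast congrArg (Nat.cast : ℕ → K) h
  have h1 : (i.factorial : K) ≠ 0 := Nat.cast_ne_zero.2 i.factorial_ne_zero
  have h2 : (j.factorial : K) ≠ 0 := Nat.cast_ne_zero.2 j.factorial_ne_zero
  have h3 : ((i+j).factorial : K) ≠ 0 := Nat.cast_ne_zero.2 (i+j).factorial_ne_zero
  field_simp
  linear_combination hK

/-- truncated exponential as a linear map -/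
noncomputable def EL (n : ℕ) (c : K) : R →ₗ[K] R :=
  ∑ k ∈ range n, ((k.factorial : K)⁻¹ * c ^ k) • (D ^ k)

lemma EL_apply (n : ℕ) (c : K) (x : R) :
    EL D n c x = ∑ k ∈ range n, ((k.factorial : K)⁻¹ * c ^ k) • (D ^ k) x := by
  simp [EL, LinearMap.sum_apply]

lemma myiter_zero_of_le {x : R} {n m : ℕ} (h : (D ^ n) x = 0) (hnm : n ≤ m) :
    (D ^ m) x = 0 := by
  obtain ⟨k, rfl⟩ := Nat.exists_eq_add_of_le hnm
  rw [add_comm, pow_add, Module.End.mul_apply, h, map_zero]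

lemma EL_eq_of_le {x : R} {n m : ℕ} (h : (D ^ n) x = 0) (hnm : n ≤ m) (c : K) :
    EL D m c x = EL D n c x := by
  rw [EL_apply, EL_apply]
  refine (Finset.sum_subset (Finset.range_subset_range.2 hnm) ?_).symm
  intro k _ hk
  rw [myiter_zero_of_le D h (by simpa using hk), smul_zero]

/-- triangle reindexing -/
lemma mytri {M : Type*} [AddCommMonoid M] (N : ℕ) (g : ℕ → ℕ → M)
    (hg : ∀ i j, N ≤ i + j → g i j = 0) :
    ∑ m ∈ range N, ∑ p ∈ Finset.HasAntidiagonal.antidiagonal m, g p.1 p.2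
      = ∑ i ∈ range N, ∑ j ∈ range N, g i j := by
  rw [← Finset.sum_product']
  rw [← Finset.sum_sigma (s := range N) (t := fun m => Finset.HasAntidiagonal.antidiagonal m)
    (f := fun p => g p.2.1 p.2.2)]
  rw [← Finset.sum_filter_of_ne (p := fun p : ℕ × ℕ => p.1 + p.2 < N)
    (fun p _ hp => by by_contra h; exact hp (hg p.1 p.2 (by omega)))]
  refine Finset.sum_nbij' (fun p => (p.2.1, p.2.2)) (fun q => ⟨q.1 + q.2, q⟩) ?_ ?_ ?_ ?_ ?_
  · intro a ha
    simp only [Finset.mem_sigma, Finset.mem_range, Finset.HasAntidiagonal.mem_antidiagonal] at ha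
    simp only [Finset.mem_filter, Finset.mem_product, Finset.mem_range]
    omega
  · intro a ha
    simp only [Finset.mem_filter, Finset.mem_product, Finset.mem_range] at ha
    simp only [Finset.mem_sigma, Finset.mem_range, Finset.HasAntidiagonal.mem_antidiagonal]
    exact ⟨by omega, trivial⟩
  · intro a ha
    simp only [Finset.mem_sigma, Finset.mem_range, Finset.HasAntidiagonal.mem_antidiagonal] at ha
    exact Sigma.ext (by simp [ha.2]) (by simp)
  · intro a ha; rfl
  · intro a ha; rfl

/-- iterated Leibniz rule -/
lemma myleibniz (hleib : ∀ x y, D (x * y) = D x * y + x * D y) (n : ℕ) (x y : R) :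
    (D ^ n) (x * y) =
      ∑ p ∈ Finset.HasAntidiagonal.antidiagonal n, n.choose p.1 • ((D ^ p.1) x * (D ^ p.2) y) := by
  induction n with
  | zero => simp
  | succ n ih =>
    rw [pow_succ', Module.End.mul_apply, ih, map_sum]
    have hterm : ∀ p ∈ Finset.HasAntidiagonal.antidiagonal n,
        D (n.choose p.1 • ((D ^ p.1) x * (D ^ p.2) y)) =
        n.choose p.1 • ((D ^ (p.1 + 1)) x * (D ^ p.2) y)
          + n.choose p.1 • ((D ^ p.1) x * (D ^ (p.2 + 1)) y) := by
      intro p hp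
      rw [map_nsmul, hleib, smul_add]
      congr 2 <;> rw [pow_succ', Module.End.mul_apply]
    rw [Finset.sum_congr rfl hterm, Finset.sum_add_distrib]
    have h1 : ∑ p ∈ Finset.HasAntidiagonal.antidiagonal (n+1), (n+1).choose p.1 • ((D ^ p.1) x * (D ^ p.2) y)
        = (D ^ 0) x * (D ^ (n+1)) y +
          ∑ p ∈ Finset.HasAntidiagonal.antidiagonal n,
            ((n.choose p.1 • ((D ^ (p.1+1)) x * (D ^ p.2) y))
              + n.choose (p.1+1) • ((D ^ (p.1+1)) x * (D ^ p.2) y)) := by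
      rw [Finset.Nat.sum_antidiagonal_succ]
      simp only [Nat.choose_succ_succ, add_smul, Nat.choose_zero_right, one_smul]
    have h2 : ∑ p ∈ Finset.HasAntidiagonal.antidiagonal n, n.choose p.1 • ((D ^ p.1) x * (D ^ (p.2+1)) y)
        = (D ^ 0) x * (D ^ (n+1)) y
          + ∑ p ∈ Finset.HasAntidiagonal.antidiagonal n, n.choose (p.1+1) • ((D ^ (p.1+1)) x * (D ^ p.2) y) := by
      have ha := Finset.Nat.sum_antidiagonal_succ
        (f := fun p => n.choose p.1 • ((D ^ p.1) x * (D ^ p.2) y)) (n := n)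
      have hb := Finset.Nat.sum_antidiagonal_succ'
        (f := fun p => n.choose p.1 • ((D ^ p.1) x * (D ^ p.2) y)) (n := n)
      simp only [Nat.choose_zero_right, one_smul, Nat.choose_succ_self, zero_smul,
        zero_add] at ha hb
      rw [← hb, ha]
    rw [h2, h1, Finset.sum_add_distrib]
    abel


lemma iter_mul_zero (hleib : ∀ x y, D (x * y) = D x * y + x * D y) {x y : R} {n : ℕ}
    (hx : (D ^ n) x = 0) (hy : (D ^ n) y = 0) : (D ^ (2 * n)) (x * y) = 0 := by
  rw [myleibniz D hleib]
  refine Finset.sum_eq_zero fun p hp => ?_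
  rw [Finset.HasAntidiagonal.mem_antidiagonal] at hp
  rcases le_or_gt n p.1 with h | h
  · rw [myiter_zero_of_le D hx h, zero_mul, smul_zero]
  · rw [myiter_zero_of_le D hy (by omega), mul_zero, smul_zero]

lemma EL_mul (hleib : ∀ x y, D (x * y) = D x * y + x * D y) {x y : R} {n : ℕ}
    (hx : (D ^ n) x = 0) (hy : (D ^ n) y = 0) (c : K) :
    EL D (2 * n) c (x * y) = EL D n c x * EL D n c y := by
  set g : ℕ → ℕ → R := fun i j =>
    ((i.factorial : K)⁻¹ * (j.factorial : K)⁻¹ * c ^ (i + j)) • ((D ^ i) x * (D ^ j) y) with hgdef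
  have hg0x : ∀ i j, n ≤ i → g i j = 0 := fun i j h => by
    simp only [hgdef, myiter_zero_of_le D hx h, zero_mul, smul_zero]
  have hg0y : ∀ i j, n ≤ j → g i j = 0 := fun i j h => by
    simp only [hgdef, myiter_zero_of_le D hy h, mul_zero, smul_zero]
  have hgv : ∀ i j, 2 * n ≤ i + j → g i j = 0 := by
    intro i j h
    rcases le_or_gt n i with h' | h'
    · exact hg0x i j h'
    · exact hg0y i j (by omega)
  have lhs : EL D (2 * n) c (x * y) = ∑ m ∈ range (2 * n), ∑ p ∈ Finset.HasAntidiagonal.antidiagonal m, g p.1 p.2 := by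
    rw [EL_apply]
    refine Finset.sum_congr rfl fun m _ => ?_
    rw [myleibniz D hleib, Finset.smul_sum]
    refine Finset.sum_congr rfl fun p hp => ?_
    rw [Finset.HasAntidiagonal.mem_antidiagonal] at hp
    rw [← Nat.cast_smul_eq_nsmul K, smul_smul]
    subst hp
    show _ = ((p.1.factorial : K)⁻¹ * (p.2.factorial : K)⁻¹ * c ^ (p.1 + p.2)) • ((D ^ p.1) x * (D ^ p.2) y)
    rw [← fact_ident (K := K) p.1 p.2]
    congr 1
    ring
  have rhs : EL D n c x * EL D n c y = ∑ i ∈ range n, ∑ j ∈ range n, g i j := by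
    rw [EL_apply, EL_apply, Finset.sum_mul_sum]
    refine Finset.sum_congr rfl fun i _ => Finset.sum_congr rfl fun j _ => ?_
    rw [smul_mul_smul_comm]
    show _ = ((i.factorial : K)⁻¹ * (j.factorial : K)⁻¹ * c ^ (i + j)) • ((D ^ i) x * (D ^ j) y)
    congr 1
    rw [pow_add]
    ring
  rw [lhs, rhs, mytri (2 * n) g hgv]
  refine (Finset.sum_subset (Finset.range_subset_range.2 (by omega)) fun i _ hi => ?_).symm.trans
    (Finset.sum_congr rfl fun i _ => (Finset.sum_subset (Finset.range_subset_range.2 (by omega))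
      fun j _ hj => hg0y i j (by simpa using hj)).symm)
  exact Finset.sum_eq_zero fun j _ => hg0x i j (by simpa using hi)


lemma iter_EL_zero {x : R} {n : ℕ} (hx : (D ^ n) x = 0) (b : K) :
    (D ^ n) (EL D n b x) = 0 := by
  rw [EL_apply, map_sum]
  refine Finset.sum_eq_zero fun k _ => ?_
  rw [map_smul, ← Module.End.mul_apply, ← pow_add, myiter_zero_of_le D hx (Nat.le_add_right n k),
    smul_zero]

lemma EL_comp {x : R} {n : ℕ} (hx : (D ^ n) x = 0) (b c : K) :
    EL D n c (EL D n b x) = EL D n (c + b) x := by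
  set g : ℕ → ℕ → R := fun i j =>
    (((i.factorial : K)⁻¹ * c ^ i) * ((j.factorial : K)⁻¹ * b ^ j)) • (D ^ (i + j)) x with hgdef
  have hgv : ∀ i j, n ≤ i + j → g i j = 0 := fun i j h => by
    simp only [hgdef, myiter_zero_of_le D hx h, smul_zero]
  have lhs : EL D n c (EL D n b x) = ∑ i ∈ range n, ∑ j ∈ range n, g i j := by
    rw [EL_apply]
    refine Finset.sum_congr rfl fun i _ => ?_
    rw [EL_apply, map_sum, Finset.smul_sum]
    refine Finset.sum_congr rfl fun j _ => ?_
    rw [map_smul, ← Module.End.mul_apply, ← pow_add, smul_smul]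
  rw [lhs, ← mytri n g hgv, EL_apply]
  refine Finset.sum_congr rfl fun m _ => ?_
  have : ∀ p ∈ Finset.HasAntidiagonal.antidiagonal m, g p.1 p.2
      = (((m.factorial : K)⁻¹) * (m.choose p.1 • (c ^ p.1 * b ^ p.2))) • (D ^ m) x := by
    intro p hp
    rw [Finset.HasAntidiagonal.mem_antidiagonal] at hp
    subst hp
    show (((p.1.factorial : K)⁻¹ * c ^ p.1) * ((p.2.factorial : K)⁻¹ * b ^ p.2)) • _ = _
    rw [nsmul_eq_mul]
    congr 1
    have hf := fact_ident (K := K) p.1 p.2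
    linear_combination (c ^ p.1 * b ^ p.2) * hf.symm
  rw [Finset.sum_congr rfl this, ← Finset.sum_smul, ← Finset.mul_sum,
    ← Commute.add_pow' (Commute.all c b) m]

lemma EL_zero_c (n : ℕ) (x : R) : EL D (n + 1) (0 : K) x = x := by
  rw [EL_apply]
  rw [Finset.sum_eq_single_of_mem 0 (Finset.mem_range.2 (Nat.succ_pos n))]
  · simp
  · intro k _ hk
    rw [zero_pow hk, mul_zero, zero_smul]

lemma EL_one_r (hD1 : D 1 = 0) (n : ℕ) (c : K) : EL D (n + 1) c (1 : R) = 1 := by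
  rw [EL_apply]
  rw [Finset.sum_eq_single_of_mem 0 (Finset.mem_range.2 (Nat.succ_pos n))]
  · simp
  · intro k _ hk
    rw [myiter_zero_of_le D (x := 1) (n := 1) (by simpa using hD1) (Nat.one_le_iff_ne_zero.2 hk),
      smul_zero]


noncomputable def Eexp (hln : ∀ r : R, ∃ n, (D ^ n) r = 0) (c : K) (x : R) : R :=
  EL D ((hln x).choose) c x

lemma Eexp_eq (hln : ∀ r : R, ∃ n, (D ^ n) r = 0) {x : R} {n : ℕ} (h : (D ^ n) x = 0) (c : K) :
    Eexp D hln c x = EL D n c x := by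
  have h1 := (hln x).choose_spec
  calc EL D ((hln x).choose) c x
      = EL D (max n ((hln x).choose)) c x := (EL_eq_of_le D h1 (le_max_right _ _) c).symm
    _ = EL D n c x := EL_eq_of_le D h (le_max_left _ _) c

lemma Eexp_add (hln : ∀ r : R, ∃ n, (D ^ n) r = 0) (c : K) (x y : R) :
    Eexp D hln c (x + y) = Eexp D hln c x + Eexp D hln c y := by
  obtain ⟨nx, hx⟩ := hln x
  obtain ⟨ny, hy⟩ := hln y
  have hx' : (D ^ max nx ny) x = 0 := myiter_zero_of_le D hx (le_max_left _ _)
  have hy' : (D ^ max nx ny) y = 0 := myiter_zero_of_le D hy (le_max_right _ _)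
  have hxy : (D ^ max nx ny) (x + y) = 0 := by rw [map_add, hx', hy', add_zero]
  rw [Eexp_eq D hln hxy, Eexp_eq D hln hx', Eexp_eq D hln hy', map_add]

lemma Eexp_smul (hln : ∀ r : R, ∃ n, (D ^ n) r = 0) (c a : K) (x : R) :
    Eexp D hln c (a • x) = a • Eexp D hln c x := by
  obtain ⟨nx, hx⟩ := hln x
  have hax : (D ^ nx) (a • x) = 0 := by rw [map_smul, hx, smul_zero]
  rw [Eexp_eq D hln hax, Eexp_eq D hln hx, map_smul]

lemma Eexp_zero_x (hln : ∀ r : R, ∃ n, (D ^ n) r = 0) (c : K) : Eexp D hln c (0 : R) = 0 := by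
  have h : (D ^ 0) (0 : R) = 0 := by simp
  rw [Eexp_eq D hln h, map_zero]

lemma Eexp_mul (hln : ∀ r : R, ∃ n, (D ^ n) r = 0) (hleib : ∀ x y, D (x * y) = D x * y + x * D y) (c : K) (x y : R) :
    Eexp D hln c (x * y) = Eexp D hln c x * Eexp D hln c y := by
  obtain ⟨nx, hx⟩ := hln x
  obtain ⟨ny, hy⟩ := hln y
  have hx' : (D ^ max nx ny) x = 0 := myiter_zero_of_le D hx (le_max_left _ _)
  have hy' : (D ^ max nx ny) y = 0 := myiter_zero_of_le D hy (le_max_right _ _)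
  have hxy := iter_mul_zero D hleib hx' hy'
  rw [Eexp_eq D hln hxy, Eexp_eq D hln hx', Eexp_eq D hln hy', EL_mul D hleib hx' hy']

lemma Eexp_one (hln : ∀ r : R, ∃ n, (D ^ n) r = 0) (hleib : ∀ x y, D (x * y) = D x * y + x * D y) (c : K) :
    Eexp D hln c (1 : R) = 1 := by
  have hD1 : D 1 = 0 := by
    have h := hleib 1 1
    rw [one_mul, mul_one, one_mul] at h
    exact (left_eq_add.1 h)
  have h1 : (D ^ 1) (1 : R) = 0 := by simpa using hD1
  rw [Eexp_eq D hln h1]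
  exact EL_one_r D hD1 0 c

lemma Eexp_comp (hln : ∀ r : R, ∃ n, (D ^ n) r = 0) (b c : K) (x : R) :
    Eexp D hln c (Eexp D hln b x) = Eexp D hln (c + b) x := by
  obtain ⟨n, hx⟩ := hln x
  rw [Eexp_eq D hln hx b, Eexp_eq D hln (iter_EL_zero D hx b) c, EL_comp D hx b c,
    Eexp_eq D hln hx (c + b)]

lemma Eexp_id (hln : ∀ r : R, ∃ n, (D ^ n) r = 0) (x : R) : Eexp D hln (0 : K) x = x := by
  obtain ⟨n, hx⟩ := hln x
  have h : (D ^ (n + 1)) x = 0 := myiter_zero_of_le D hx (Nat.le_succ n)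
  rw [Eexp_eq D hln h, EL_zero_c]

noncomputable def EexpHom (hln : ∀ r : R, ∃ n, (D ^ n) r = 0) (hleib : ∀ x y, D (x * y) = D x * y + x * D y) (c : K) :
    R →ₐ[K] R where
  toFun := Eexp D hln c
  map_one' := Eexp_one D hln hleib c
  map_mul' := Eexp_mul D hln hleib c
  map_zero' := Eexp_zero_x D hln c
  map_add' := Eexp_add D hln c
  commutes' := fun a => by
    rw [Algebra.algebraMap_eq_smul_one]
    show Eexp D hln c (a • 1) = a • 1
    rw [Eexp_smul D hln c a 1, Eexp_one D hln hleib c]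

noncomputable def EexpAut (hln : ∀ r : R, ∃ n, (D ^ n) r = 0) (hleib : ∀ x y, D (x * y) = D x * y + x * D y) (c : K) :
    R ≃ₐ[K] R :=
  AlgEquiv.ofAlgHom (EexpHom D hln hleib c) (EexpHom D hln hleib (-c))
    (AlgHom.ext fun x => by
      show Eexp D hln c (Eexp D hln (-c) x) = x
      rw [Eexp_comp, add_neg_cancel, Eexp_id])
    (AlgHom.ext fun x => by
      show Eexp D hln (-c) (Eexp D hln c x) = x
      rw [Eexp_comp, neg_add_cancel, Eexp_id])

lemma EexpAut_apply (hln : ∀ r : R, ∃ n, (D ^ n) r = 0) (hleib : ∀ x y, D (x * y) = D x * y + x * D y) (c : K) (x : R) :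
    EexpAut D hln hleib c x = Eexp D hln c x := rfl

end Aux

/-- Every subspace of an algebra `R` over a field of characteristic zero that is invariant under
all algebra automorphisms of `R` is stable under every locally nilpotent derivation of `R`. -/
theorem stmt1 {K R : Type*} [Field K] [CharZero K] [Ring R] [Algebra K R]
    (V : Submodule K R)
    (hinv : ∀ σ : R ≃ₐ[K] R, ∀ v ∈ V, σ v ∈ V)
    (d : R → R)
    (hadd : ∀ x y, d (x + y) = d x + d y)
    (hsmul : ∀ (c : K) (x : R), d (c • x) = c • d x)
    (hleib : ∀ x y, d (x * y) = d x * y + x * d y)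
    (hln : ∀ r : R, ∃ n, d^[n] r = 0) :
    ∀ v ∈ V, d v ∈ V := by
  intro v hv
  set D : R →ₗ[K] R := IsLinearMap.mk' d ⟨hadd, hsmul⟩ with hDdef
  have hD : ∀ x, D x = d x := fun x => rfl
  have hpow : ∀ (n : ℕ) (x : R), (D ^ n) x = d^[n] x := fun n x => by
    rw [Module.End.pow_apply]
    have hcoe : ⇑D = d := rfl
    rw [hcoe]
  have hln' : ∀ r : R, ∃ n, (D ^ n) r = 0 := fun r => by
    obtain ⟨n, hn⟩ := hln r
    exact ⟨n, by rw [hpow]; exact hn⟩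
  have hleib' : ∀ x y, D (x * y) = D x * y + x * D y := fun x y => hleib x y
  obtain ⟨n0, hn0⟩ := hln' v
  set m : ℕ := n0 + 2 with hmdef
  have hm : (D ^ m) v = 0 := myiter_zero_of_le D hn0 (by omega)
  set u : Fin m → R := fun k => (((k : ℕ).factorial : K)⁻¹) • (D ^ (k : ℕ)) v with hudef
  have hw : ∀ c : K, (∑ k : Fin m, c ^ (k : ℕ) • u k) ∈ V := by
    intro c
    have h1 := hinv (EexpAut D hln' hleib' c) v hv
    have h2 : EexpAut D hln' hleib' c v = ∑ k : Fin m, c ^ (k : ℕ) • u k := by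
      rw [EexpAut_apply, Eexp_eq D hln' hm c, EL_apply,
        ← Fin.sum_univ_eq_sum_range (fun k => ((k.factorial : K)⁻¹ * c ^ k) • (D ^ k) v) m]
      refine Finset.sum_congr rfl fun k _ => ?_
      rw [hudef, smul_smul, mul_comm]
    rwa [h2] at h1
  set M : Matrix (Fin m) (Fin m) K := Matrix.vandermonde (fun i => ((i : ℕ) : K)) with hMdef
  have hdet : IsUnit M.det := by
    rw [hMdef, Matrix.det_vandermonde]
    rw [isUnit_iff_ne_zero]
    refine Finset.prod_ne_zero_iff.2 fun i _ => Finset.prod_ne_zero_iff.2 fun j hj => ?_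
    rw [Finset.mem_Ioi] at hj
    have : (i : ℕ) < (j : ℕ) := hj
    intro hc
    rw [sub_eq_zero] at hc
    have := Nat.cast_injective (R := K) hc
    omega
  have hMw : ∀ i : Fin m, (∑ k, M i k • u k) ∈ V := by
    intro i
    simpa [hMdef, Matrix.vandermonde] using hw (((i : ℕ) : K))
  have hu : ∀ k, u k ∈ V := by
    intro k
    have hid : M⁻¹ * M = 1 := Matrix.nonsing_inv_mul M hdet
    have key : u k = ∑ i, (M⁻¹ k i) • (∑ j, M i j • u j) := by
      simp_rw [Finset.smul_sum, smul_smul]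
      rw [Finset.sum_comm]
      simp_rw [← Finset.sum_smul, ← Matrix.mul_apply, hid, Matrix.one_apply]
      simp [Finset.sum_ite_eq]
    rw [key]
    exact Submodule.sum_smul_mem V _ fun i _ => hMw i
  have h1 : u ⟨1, by omega⟩ = d v := by
    rw [hudef]
    simp only [Nat.factorial_one, Nat.cast_one, inv_one, one_smul, pow_one]
    exact hD v
  exact h1 ▸ hu ⟨1, by omega⟩
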